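/- The map φ: 𝒞ₙ → 𝒢ₙᵉˣᵗ assigning to a configuration of little cubes its separation graph is a lax morphism of operads: for c ∈ 𝒞ₙ(A), d ∈ 𝒞ₙ(B), and a ∈ A, one has φ(c ∘_a d) ≤ φ(c) ∘_a φ(d) in the poset 𝒢ₙᵉˣᵗ(A[B/a]). -/
import Mathlib


/-! Little cubes are recorded by their lower corner `v` and (positive) edge lengths `u`,
with coordinates indexed by `ℕ` (only the first `n` coordinates being relevant). -/

/-- `c_x` is `i`-below `c_y`: the cubes are separated by a hyperplane in direction `i`. -/
def sep {A : Type} (v u : A → ℕ → ℝ) (i : ℕ) (x y : A) : Prop :=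
  v x i + u x i ≤ v y i

/-- The weight of the edge of the separation graph `φ(c)` between `x` and `y`:
the smallest direction in which the two cubes are separated. -/
noncomputable def wphi {A : Type} (v u : A → ℕ → ℝ) (x y : A) : ℕ :=
  sInf {i | sep v u i x y ∨ sep v u i y x}

/-- The direction of the edge of `φ(c)` between `x` and `y`: from `x` to `y` iff `c_x`
is below `c_y` in the minimal separating direction. -/
def dphi {A : Type} (v u : A → ℕ → ℝ) (x y : A) : Prop :=
  sep v u (wphi v u x y) x y

/-- Lower corners of the composite configuration `c ∘_a d`. -/
def vComp {A B : Type} (a : A) (v u : A → ℕ → ℝ) (v' : B → ℕ → ℝ) :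
    ({x : A // x ≠ a} ⊕ B) → ℕ → ℝ
  | .inl x => v x.1
  | .inr b => fun i => u a i * v' b i + v a i

/-- Edge lengths of the composite configuration `c ∘_a d`. -/
def uComp {A B : Type} (a : A) (u : A → ℕ → ℝ) (u' : B → ℕ → ℝ) :
    ({x : A // x ≠ a} ⊕ B) → ℕ → ℝ
  | .inl x => u x.1
  | .inr b => fun i => u a i * u' b i

/-- The direction relation of the composite graph `φ(c) ∘_a φ(d)`. -/
def dirCompPhi {A B : Type} (a : A) (v u : A → ℕ → ℝ) (v' u' : B → ℕ → ℝ) :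
    ({x : A // x ≠ a} ⊕ B) → ({x : A // x ≠ a} ⊕ B) → Prop
  | .inl x, .inl y => dphi v u x.1 y.1
  | .inl x, .inr _ => dphi v u x.1 a
  | .inr _, .inl y => dphi v u a y.1
  | .inr b, .inr b' => dphi v' u' b b'

/-- The weight function of the composite graph `φ(c) ∘_a φ(d)`. -/
noncomputable def wtCompPhi {A B : Type} (a : A) (v u : A → ℕ → ℝ) (v' u' : B → ℕ → ℝ) :
    ({x : A // x ≠ a} ⊕ B) → ({x : A // x ≠ a} ⊕ B) → ℕ
  | .inl x, .inl y => wphi v u x.1 y.1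
  | .inl x, .inr _ => wphi v u x.1 a
  | .inr _, .inl y => wphi v u a y.1
  | .inr b, .inr b' => wphi v' u' b b'

section Aux

variable {A B : Type} (a : A) (v u : A → ℕ → ℝ) (v' u' : B → ℕ → ℝ)

private lemma inr_lower (hu : ∀ x i, 0 < u x i) (hv' : ∀ b i, 0 ≤ v' b i) (b : B) (i : ℕ) :
    v a i ≤ vComp a v u v' (.inr b) i := by
  simp only [vComp]
  nlinarith [hu a i, hv' b i]

private lemma inr_upper (hu : ∀ x i, 0 < u x i) (hv'1 : ∀ b i, v' b i + u' b i ≤ 1)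
    (b : B) (i : ℕ) :
    vComp a v u v' (.inr b) i + uComp a u u' (.inr b) i ≤ v a i + u a i := by
  simp only [vComp, uComp]
  nlinarith [hu a i, hv'1 b i]

private lemma inr_width (hu : ∀ x i, 0 < u x i) (hu' : ∀ b i, 0 < u' b i) (b : B) (i : ℕ) :
    0 < uComp a u u' (.inr b) i := by
  simp only [uComp]
  exact mul_pos (hu a i) (hu' b i)

private lemma sep_comp_of_below (hu : ∀ x i, 0 < u x i) (hv' : ∀ b i, 0 ≤ v' b i)
    (x : {x : A // x ≠ a}) (b : B) (i : ℕ) (h : sep v u i x.1 a) :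
    sep (vComp a v u v') (uComp a u u') i (.inl x) (.inr b) := by
  have h1 := inr_lower a v u v' hu hv' b i
  simp only [sep, vComp, uComp] at *
  linarith

private lemma sep_comp_of_above (hu : ∀ x i, 0 < u x i) (hv'1 : ∀ b i, v' b i + u' b i ≤ 1)
    (x : {x : A // x ≠ a}) (b : B) (i : ℕ) (h : sep v u i a x.1) :
    sep (vComp a v u v') (uComp a u u') i (.inr b) (.inl x) := by
  have h1 := inr_upper a v u v' u' hu hv'1 b i
  simp only [sep, vComp, uComp] at *
  linarith

private lemma contra_below (hu : ∀ x i, 0 < u x i) (hu' : ∀ b i, 0 < u' b i)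
    (hv' : ∀ b i, 0 ≤ v' b i) (hv'1 : ∀ b i, v' b i + u' b i ≤ 1)
    (x : {x : A // x ≠ a}) (b : B) (i : ℕ) (h : sep v u i a x.1)
    (h' : sep (vComp a v u v') (uComp a u u') i (.inl x) (.inr b)) : False := by
  have h1 := inr_upper a v u v' u' hu hv'1 b i
  have h2 := inr_width a u u' hu hu' b i
  have h3 := hu x.1 i
  simp only [sep, vComp, uComp] at h h' h1 h2
  linarith

private lemma contra_above (hu : ∀ x i, 0 < u x i) (hu' : ∀ b i, 0 < u' b i)
    (hv' : ∀ b i, 0 ≤ v' b i) (hv'1 : ∀ b i, v' b i + u' b i ≤ 1)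
    (x : {x : A // x ≠ a}) (b : B) (i : ℕ) (h : sep v u i x.1 a)
    (h' : sep (vComp a v u v') (uComp a u u') i (.inr b) (.inl x)) : False := by
  have h1 := inr_lower a v u v' hu hv' b i
  have h2 := inr_width a u u' hu hu' b i
  have h3 := hu x.1 i
  simp only [sep, vComp, uComp] at h h' h1 h2
  linarith

private lemma sep_inr_inr (hu : ∀ x i, 0 < u x i) (i : ℕ) (p q : B) :
    sep (vComp a v u v') (uComp a u u') i (.inr p) (.inr q) ↔ sep v' u' i p q := by
  have hpos := hu a i
  simp only [sep, vComp, uComp]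
  rw [show u a i * v' p i + v a i + u a i * u' p i
      = u a i * (v' p i + u' p i) + v a i by ring]
  constructor
  · intro h
    have : u a i * (v' p i + u' p i) ≤ u a i * v' q i := by linarith
    exact le_of_mul_le_mul_left this hpos
  · intro h
    nlinarith

private lemma wphi_comm (x y : A) : wphi v u x y = wphi v u y x :=
  congrArg sInf (Set.ext fun _ => or_comm)

end Aux

/-- the separation-graph map `φ : 𝒞ₙ → 𝒢ₙᵉˣᵗ` is a lax morphism of operads:
`φ(c ∘_a d) ≤ φ(c) ∘_a φ(d)` in the poset `𝒢ₙᵉˣᵗ(A[B/a])`. -/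
theorem statement6 {A B : Type} (a : A) (v u : A → ℕ → ℝ) (v' u' : B → ℕ → ℝ)
    (hu : ∀ x i, 0 < u x i) (hu' : ∀ b i, 0 < u' b i)
    (hv' : ∀ b i, 0 ≤ v' b i) (hv'1 : ∀ b i, v' b i + u' b i ≤ 1)
    (hsepA : ∀ x y : A, x ≠ y → ∃ i, sep v u i x y ∨ sep v u i y x)
    (hsepB : ∀ b b' : B, b ≠ b' → ∃ i, sep v' u' i b b' ∨ sep v' u' i b' b) :
    ∀ p q : {x : A // x ≠ a} ⊕ B, p ≠ q →
      dphi (vComp a v u v') (uComp a u u') p q →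
        (dirCompPhi a v u v' u' p q ∧
          wphi (vComp a v u v') (uComp a u u') p q ≤ wtCompPhi a v u v' u' p q) ∨
        (dirCompPhi a v u v' u' q p ∧
          wphi (vComp a v u v') (uComp a u u') p q < wtCompPhi a v u v' u' q p) := by
  intro p q hpq hd
  match p, q with
  | .inl x, .inl y =>
    exact Or.inl ⟨hd, le_refl _⟩
  | .inr b, .inr b' =>
    have hset : {i | sep (vComp a v u v') (uComp a u u') i (.inr b) (.inr b') ∨
        sep (vComp a v u v') (uComp a u u') i (.inr b') (.inr b)} =
        {i | sep v' u' i b b' ∨ sep v' u' i b' b} := by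
      ext i
      simp only [Set.mem_setOf_eq, sep_inr_inr a v u v' u' hu]
    have hw : wphi (vComp a v u v') (uComp a u u') (.inr b) (.inr b') = wphi v' u' b b' :=
      congrArg sInf hset
    left
    constructor
    · show dphi v' u' b b'
      unfold dphi
      rw [← hw]
      exact (sep_inr_inr a v u v' u' hu _ b b').mp hd
    · show wphi (vComp a v u v') (uComp a u u') (.inr b) (.inr b') ≤ wphi v' u' b b'
      rw [hw]
  | .inl x, .inr b =>
    have hT : Set.Nonempty {i | sep v u i x.1 a ∨ sep v u i a x.1} := hsepA x.1 a x.2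
    have hWmem : wphi v u x.1 a ∈ {i | sep v u i x.1 a ∨ sep v u i a x.1} := Nat.sInf_mem hT
    have hwW : wphi (vComp a v u v') (uComp a u u') (.inl x) (.inr b) ≤ wphi v u x.1 a := by
      apply Nat.sInf_le
      rcases hWmem with h | h
      · exact Or.inl (sep_comp_of_below a v u v' u' hu hv' x b _ h)
      · exact Or.inr (sep_comp_of_above a v u v' u' hu hv'1 x b _ h)
    rcases hWmem with h | h
    · exact Or.inl ⟨h, hwW⟩
    · right
      have heq : wphi v u a x.1 = wphi v u x.1 a := wphi_comm v u a x.1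
      constructor
      · show dphi v u a x.1
        unfold dphi
        rw [heq]
        exact h
      · show wphi (vComp a v u v') (uComp a u u') (.inl x) (.inr b) < wphi v u a x.1
        rw [heq]
        refine lt_of_le_of_ne hwW ?_
        intro hEq
        exact contra_below a v u v' u' hu hu' hv' hv'1 x b _ h (hEq ▸ hd)
  | .inr b, .inl y =>
    have hT : Set.Nonempty {i | sep v u i a y.1 ∨ sep v u i y.1 a} := hsepA a y.1 (Ne.symm y.2)
    have hWmem : wphi v u a y.1 ∈ {i | sep v u i a y.1 ∨ sep v u i y.1 a} := Nat.sInf_mem hT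
    have hwW : wphi (vComp a v u v') (uComp a u u') (.inr b) (.inl y) ≤ wphi v u a y.1 := by
      apply Nat.sInf_le
      rcases hWmem with h | h
      · exact Or.inl (sep_comp_of_above a v u v' u' hu hv'1 y b _ h)
      · exact Or.inr (sep_comp_of_below a v u v' u' hu hv' y b _ h)
    rcases hWmem with h | h
    · exact Or.inl ⟨h, hwW⟩
    · right
      have heq : wphi v u y.1 a = wphi v u a y.1 := wphi_comm v u y.1 a
      constructor
      · show dphi v u y.1 a
        unfold dphi
        rw [heq]
        exact h
      · show wphi (vComp a v u v') (uComp a u u') (.inr b) (.inl y) < wphi v u y.1 a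
        rw [heq]
        refine lt_of_le_of_ne hwW ?_
        intro hEq
        exact contra_above a v u v' u' hu hu' hv' hv'1 y b _ h (hEq ▸ hd)
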